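/- If w, w' ∈ S(n,r) and w covers w' in the order of S(n,r), then w^c covers (w')^c; in particular, the complementation map w ↦ w^c sends covering pairs to reversed covering pairs. -/

import Mathlib

open Finset

/-- The alphabet `A(n,r)` is encoded as the integer interval `[-(n-r), r]`:
the barred symbol `k̄` is `-k`, the tilded symbol `k̃` is `k`, and `0` is `0`.
A string of `S(n,r)` is a function `w : Fin n → ℤ` satisfying: the first `r`
entries lie in `[0,r]`, the last `n-r` entries lie in `[-(n-r),0]`, the whole
string is weakly decreasing, the nonzero entries of the positive part are
strictly decreasing, and the nonzero entries of the negative part are strictly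
decreasing. -/
def Admissible (n r : ℕ) (w : Fin n → ℤ) : Prop :=
  (∀ i : Fin n, (i : ℕ) < r → 0 ≤ w i ∧ w i ≤ (r : ℤ)) ∧
  (∀ i : Fin n, r ≤ (i : ℕ) → -((n - r : ℕ) : ℤ) ≤ w i ∧ w i ≤ 0) ∧
  (∀ i j : Fin n, i ≤ j → w j ≤ w i) ∧
  (∀ i j : Fin n, i < j → (j : ℕ) < r → w j ≠ 0 → w j < w i) ∧
  (∀ i j : Fin n, i < j → r ≤ (i : ℕ) → w i ≠ 0 → w j < w i)

/-- The componentwise (product) order on strings. -/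
def sle {n : ℕ} (w w' : Fin n → ℤ) : Prop := ∀ i, w i ≤ w' i

/-- Strict componentwise order. -/
def slt {n : ℕ} (w w' : Fin n → ℤ) : Prop := sle w w' ∧ w ≠ w'

/-- `w'` covers `w` in the poset `S(n,r)`. -/
def SCovers (n r : ℕ) (w w' : Fin n → ℤ) : Prop :=
  slt w w' ∧ ¬ ∃ u : Fin n → ℤ, Admissible n r u ∧ slt w u ∧ slt u w'

/-- The rank function `ρ` of `S(n,r)`:
`ρ(i_1⋯i_r|j_1⋯j_{n-r}) = Σ i_k + Σ (k - j_k)` (symbols read as integers). -/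
def rho (n r : ℕ) (w : Fin n → ℤ) : ℤ :=
  ∑ i : Fin n, (if (i : ℕ) < r then w i else ((((i : ℕ) - r : ℕ) : ℤ) + 1 + w i))

/-- `wc` is the complement of `w` in `S(n,r)`: the nonzero symbols of `wc`
are exactly the elements of `A(n,r) ∖ {0}` that are not symbols of `w`. -/
def ComplOf (n r : ℕ) (w wc : Fin n → ℤ) : Prop :=
  ∀ a : ℤ, a ≠ 0 →
    ((∃ i, wc i = a) ↔ (-((n - r : ℕ) : ℤ) ≤ a ∧ a ≤ (r : ℤ) ∧ ¬ ∃ i, w i = a))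

/-- The top rank `R(n,r) = C(r+1,2) + C(n-r+1,2)`. -/
def Rnk (n r : ℕ) : ℕ := r * (r + 1) / 2 + (n - r) * (n - r + 1) / 2

/-- `s(n,r,k)`: the number of elements of `S(n,r)` of rank `k`. -/
noncomputable def sCount (n r k : ℕ) : ℕ :=
  {w : Fin n → ℤ | Admissible n r w ∧ rho n r w = (k : ℤ)}.ncard

/-- The minimum `0⋯0|12⋯(n-r)` of `S(n,r)`. -/
def botStr (n r : ℕ) : Fin n → ℤ :=
  fun i => if (i : ℕ) < r then 0 else -((((i : ℕ) - r : ℕ) : ℤ) + 1)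

/-- The maximum `r(r-1)⋯1|0⋯0` of `S(n,r)`. -/
def topStr (n r : ℕ) : Fin n → ℤ :=
  fun i => if (i : ℕ) < r then (r : ℤ) - ((i : ℕ) : ℤ) else 0

/-- The string `r(r-1)⋯1|12⋯(n-r)` containing every nonzero symbol. -/
def fullStr (n r : ℕ) : Fin n → ℤ :=
  fun i => if (i : ℕ) < r then (r : ℤ) - ((i : ℕ) : ℤ)
           else -((((i : ℕ) - r : ℕ) : ℤ) + 1)

/-- An `(n,r)`-function: increasing on the alphabet, zero at `0`,
and strictly negative on the barred symbols. -/
def IsNRFun (n r : ℕ) (f : ℤ → ℝ) : Prop :=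
  f 0 = 0 ∧
  (∀ a b : ℤ, -((n - r : ℕ) : ℤ) ≤ a → a ≤ b → b ≤ (r : ℤ) → f a ≤ f b) ∧
  (∀ a : ℤ, -((n - r : ℕ) : ℤ) ≤ a → a < 0 → f a < 0)

/-- The total sum of `f` over the alphabet `A(n,r)` is nonnegative
(the defining condition of an `(n,r)`-weight function, since `f 0 = 0`). -/
def TotalNN (n r : ℕ) (f : ℤ → ℝ) : Prop :=
  0 ≤ ∑ a ∈ Finset.Icc (-((n - r : ℕ) : ℤ)) (r : ℤ), f a

/-- The sum function `Σ_f` induced by `f` on strings. -/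
def Sf (n : ℕ) (f : ℤ → ℝ) (w : Fin n → ℤ) : ℝ := ∑ i : Fin n, f (w i)
namespace SnrCompl

open Finset List

variable {n r : ℕ}

/-- number of positions in the positive part with value `≥ x` -/
def cntP (n r : ℕ) (w : Fin n → ℤ) (x : ℤ) : ℕ :=
  (Finset.univ.filter (fun i : Fin n => (i : ℕ) < r ∧ x ≤ w i)).card

/-- number of positions in the negative part with value `≤ -x` -/
def cntN (n r : ℕ) (w : Fin n → ℤ) (x : ℤ) : ℕ :=
  (Finset.univ.filter (fun i : Fin n => r ≤ (i : ℕ) ∧ w i ≤ -x)).card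

lemma cntP_eq {w : Fin n → ℤ} (hw : Admissible n r w) {x : ℤ} (hx : 1 ≤ x) :
    cntP n r w x = ((Finset.Icc x (r:ℤ)).filter (fun a => ∃ i, w i = a)).card := by
  apply Finset.card_nbij (fun i => w i)
  · intro i hi
    simp only [Finset.mem_coe, Finset.mem_filter, Finset.mem_univ, true_and] at hi
    rw [Finset.mem_coe, Finset.mem_filter]
    exact ⟨Finset.mem_Icc.mpr ⟨hi.2, ((hw.1 i hi.1).2)⟩, ⟨i, rfl⟩⟩
  · intro a ha b hb hab
    simp only [Finset.coe_filter, Set.mem_setOf_eq, Finset.mem_univ, true_and] at ha hb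
    have hab' : w a = w b := hab
    by_contra hne
    rcases lt_or_gt_of_ne (α := Fin n) hne with h | h
    · exact absurd hab' (ne_of_gt (hw.2.2.2.1 a b h hb.1 (by omega)))
    · exact absurd hab'.symm (ne_of_gt (hw.2.2.2.1 b a h ha.1 (by omega)))
  · intro a ha
    simp only [Finset.coe_filter, Set.mem_setOf_eq, Finset.mem_coe,
      Finset.mem_Icc] at ha
    obtain ⟨⟨hxa, har⟩, i, hi⟩ := ha
    refine ⟨i, ?_, hi⟩
    simp only [Finset.coe_filter, Set.mem_setOf_eq, Finset.mem_univ, true_and]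
    have hir : (i : ℕ) < r := by
      by_contra hle
      have := (hw.2.1 i (by omega)).2
      omega
    exact ⟨hir, by omega⟩

lemma cntN_eq {w : Fin n → ℤ} (hw : Admissible n r w) {x : ℤ} (hx : 1 ≤ x) :
    cntN n r w x
      = ((Finset.Icc x ((n - r : ℕ) : ℤ)).filter (fun a => ∃ i, w i = -a)).card := by
  apply Finset.card_nbij (fun i => -(w i))
  · intro i hi
    simp only [Finset.mem_coe, Finset.mem_filter, Finset.mem_univ, true_and] at hi
    rw [Finset.mem_coe, Finset.mem_filter]
    have := (hw.2.1 i hi.1).1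
    beta_reduce
    exact ⟨Finset.mem_Icc.mpr ⟨by omega, by omega⟩, ⟨i, by omega⟩⟩
  · intro a ha b hb hab
    simp only [Finset.coe_filter, Set.mem_setOf_eq, Finset.mem_univ, true_and] at ha hb
    have hab0 : -(w a) = -(w b) := hab
    have hab' : w a = w b := by omega
    by_contra hne
    rcases lt_or_gt_of_ne (α := Fin n) hne with h | h
    · exact absurd hab' (ne_of_gt (hw.2.2.2.2 a b h ha.1 (by omega)))
    · exact absurd hab'.symm (ne_of_gt (hw.2.2.2.2 b a h hb.1 (by omega)))
  · intro a ha
    simp only [Finset.coe_filter, Set.mem_setOf_eq, Finset.mem_coe,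
      Finset.mem_Icc] at ha
    obtain ⟨⟨hxa, har⟩, i, hi⟩ := ha
    refine ⟨i, ?_, by simp only; omega⟩
    simp only [Finset.coe_filter, Set.mem_setOf_eq, Finset.mem_univ, true_and]
    have hir : r ≤ (i : ℕ) := by
      by_contra hlt
      have := (hw.1 i (by omega)).1
      omega
    exact ⟨hir, by omega⟩

lemma le_of_cntP {u v : Fin n → ℤ} (hu : Admissible n r u) (hv : Admissible n r v)
    (h : ∀ x : ℤ, 1 ≤ x → cntP n r u x ≤ cntP n r v x)
    (i : Fin n) (hi : (i : ℕ) < r) : u i ≤ v i := by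
  rcases le_or_gt (u i) 0 with h0 | h0
  · exact le_trans h0 (hv.1 i hi).1
  set x := u i with hxdef
  have hx : 1 ≤ x := h0
  have h1 : Finset.Iic i ⊆ Finset.univ.filter (fun j : Fin n => (j : ℕ) < r ∧ x ≤ u j) := by
    intro j hj
    rw [Finset.mem_Iic] at hj
    simp only [Finset.mem_filter, Finset.mem_univ, true_and]
    refine ⟨by have := Fin.le_def.mp hj; omega, hu.2.2.1 j i hj⟩
  have hc1 : (i : ℕ) + 1 ≤ cntP n r u x := by
    have := Finset.card_le_card h1
    rwa [Fin.card_Iic] at this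
  have hc2 : (i : ℕ) + 1 ≤ cntP n r v x := le_trans hc1 (h x hx)
  by_contra hcon
  push_neg at hcon
  have hsub : Finset.univ.filter (fun j : Fin n => (j : ℕ) < r ∧ x ≤ v j) ⊆ Finset.Iio i := by
    intro j hj
    simp only [Finset.mem_filter, Finset.mem_univ, true_and] at hj
    rw [Finset.mem_Iio]
    by_contra hge
    push_neg at hge
    have := hv.2.2.1 i j hge
    omega
  have := Finset.card_le_card hsub
  rw [Fin.card_Iio] at this
  unfold cntP at hc2
  omega

lemma le_of_cntN {u v : Fin n → ℤ} (hu : Admissible n r u) (hv : Admissible n r v)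
    (h : ∀ x : ℤ, 1 ≤ x → cntN n r v x ≤ cntN n r u x)
    (i : Fin n) (hi : r ≤ (i : ℕ)) : u i ≤ v i := by
  rcases le_or_gt 0 (v i) with h0 | h0
  · exact le_trans (hu.2.1 i hi).2 h0
  set x := -(v i) with hxdef
  have hx : 1 ≤ x := by omega
  have h1 : Finset.Ici i ⊆ Finset.univ.filter (fun j : Fin n => r ≤ (j : ℕ) ∧ v j ≤ -x) := by
    intro j hj
    rw [Finset.mem_Ici] at hj
    simp only [Finset.mem_filter, Finset.mem_univ, true_and]
    refine ⟨by have := Fin.le_def.mp hj; omega, le_trans (hv.2.2.1 i j hj) (by omega)⟩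
  have hc1 : n - (i : ℕ) ≤ cntN n r v x := by
    have := Finset.card_le_card h1
    rwa [Fin.card_Ici] at this
  have hc2 : n - (i : ℕ) ≤ cntN n r u x := le_trans hc1 (h x hx)
  by_contra hcon
  push_neg at hcon
  have hsub : Finset.univ.filter (fun j : Fin n => r ≤ (j : ℕ) ∧ u j ≤ -x) ⊆ Finset.Ioi i := by
    intro j hj
    simp only [Finset.mem_filter, Finset.mem_univ, true_and] at hj
    rw [Finset.mem_Ioi]
    by_contra hge
    push_neg at hge
    have := hu.2.2.1 j i hge
    omega
  have := Finset.card_le_card hsub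
  rw [Fin.card_Ioi] at this
  have hin : (i : ℕ) < n := i.isLt
  unfold cntN at hc2
  omega

lemma cnt_compl_P {w wc : Fin n → ℤ} (hw : Admissible n r w) (hwc : Admissible n r wc)
    (hc : ComplOf n r w wc) {x : ℤ} (hx : 1 ≤ x) :
    cntP n r wc x + cntP n r w x = (Finset.Icc x (r:ℤ)).card := by
  rw [cntP_eq hw hx, cntP_eq hwc hx]
  have hcong : (Finset.Icc x (r:ℤ)).filter (fun a => ∃ i, wc i = a)
      = (Finset.Icc x (r:ℤ)).filter (fun a => ¬ ∃ i, w i = a) := by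
    apply Finset.filter_congr
    intro a ha
    rw [Finset.mem_Icc] at ha
    have hane : a ≠ 0 := by omega
    have := hc a hane
    simp only [this]
    constructor
    · rintro ⟨_, _, h⟩; exact h
    · intro h; exact ⟨by omega, ha.2, h⟩
  rw [hcong]
  rw [add_comm]
  exact Finset.card_filter_add_card_filter_not _

lemma cnt_compl_N {w wc : Fin n → ℤ} (hw : Admissible n r w) (hwc : Admissible n r wc)
    (hc : ComplOf n r w wc) {x : ℤ} (hx : 1 ≤ x) :
    cntN n r wc x + cntN n r w x = (Finset.Icc x ((n - r : ℕ) : ℤ)).card := by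
  rw [cntN_eq hw hx, cntN_eq hwc hx]
  have hcong : (Finset.Icc x ((n - r : ℕ):ℤ)).filter (fun a => ∃ i, wc i = -a)
      = (Finset.Icc x ((n - r : ℕ):ℤ)).filter (fun a => ¬ ∃ i, w i = -a) := by
    apply Finset.filter_congr
    intro a ha
    rw [Finset.mem_Icc] at ha
    have hane : -a ≠ 0 := by omega
    have := hc (-a) hane
    simp only [this]
    constructor
    · rintro ⟨_, _, h⟩; exact h
    · intro h; exact ⟨by omega, by omega, h⟩
  rw [hcong]
  rw [add_comm]
  exact Finset.card_filter_add_card_filter_not _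

/-- complementation is order-reversing -/
lemma sle_compl {u v uc vc : Fin n → ℤ} (hu : Admissible n r u) (hv : Admissible n r v)
    (huc : Admissible n r uc) (hvc : Admissible n r vc)
    (hcu : ComplOf n r u uc) (hcv : ComplOf n r v vc)
    (h : sle u v) : sle vc uc := by
  intro i
  rcases lt_or_ge (i : ℕ) r with hi | hi
  · apply le_of_cntP hvc huc _ i hi
    intro x hx
    have h1 := cnt_compl_P hu huc hcu hx
    have h2 := cnt_compl_P hv hvc hcv hx
    have h3 : cntP n r u x ≤ cntP n r v x := by
      apply Finset.card_le_card
      intro j hj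
      simp only [Finset.mem_filter, Finset.mem_univ, true_and] at hj ⊢
      exact ⟨hj.1, le_trans hj.2 (h j)⟩
    omega
  · apply le_of_cntN hvc huc _ i hi
    intro x hx
    have h1 := cnt_compl_N hu huc hcu hx
    have h2 := cnt_compl_N hv hvc hcv hx
    have h3 : cntN n r v x ≤ cntN n r u x := by
      apply Finset.card_le_card
      intro j hj
      simp only [Finset.mem_filter, Finset.mem_univ, true_and] at hj ⊢
      exact ⟨hj.1, le_trans (h j) hj.2⟩
    omega

/-- a string is determined by its complement -/
lemma compl_unique {b c1 c2 : Fin n → ℤ} (hb : Admissible n r b)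
    (h1 : Admissible n r c1) (h2 : Admissible n r c2)
    (hc1 : ComplOf n r b c1) (hc2 : ComplOf n r b c2) : c1 = c2 := by
  have hP : ∀ x : ℤ, 1 ≤ x → cntP n r c1 x = cntP n r c2 x := by
    intro x hx
    have e1 := cnt_compl_P hb h1 hc1 hx
    have e2 := cnt_compl_P hb h2 hc2 hx
    omega
  have hN : ∀ x : ℤ, 1 ≤ x → cntN n r c1 x = cntN n r c2 x := by
    intro x hx
    have e1 := cnt_compl_N hb h1 hc1 hx
    have e2 := cnt_compl_N hb h2 hc2 hx
    omega
  funext i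
  rcases lt_or_ge (i : ℕ) r with hi | hi
  · exact le_antisymm
      (le_of_cntP h1 h2 (fun x hx => (hP x hx).le) i hi)
      (le_of_cntP h2 h1 (fun x hx => (hP x hx).ge) i hi)
  · exact le_antisymm
      (le_of_cntN h1 h2 (fun x hx => (hN x hx).ge) i hi)
      (le_of_cntN h2 h1 (fun x hx => (hN x hx).le) i hi)

/-- complementation is an involution -/
lemma compl_symm {b c : Fin n → ℤ} (hb : Admissible n r b)
    (hc : ComplOf n r b c) : ComplOf n r c b := by
  intro a ha
  constructor
  · rintro ⟨i, hi⟩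
    have hrange : -((n - r : ℕ) : ℤ) ≤ a ∧ a ≤ (r : ℤ) := by
      rcases lt_or_ge (i : ℕ) r with h' | h'
      · have := hb.1 i h'; omega
      · have := hb.2.1 i h'; omega
    refine ⟨hrange.1, hrange.2, ?_⟩
    rintro ⟨j, hj⟩
    have := (hc a ha).mp ⟨j, hj⟩
    exact this.2.2 ⟨i, hi⟩
  · rintro ⟨hlo, hhi, hnc⟩
    by_contra hnb
    exact hnc (((hc a ha).mpr ⟨hlo, hhi, fun hb' => hnb hb'⟩))


section Construction

/-- descending list of the positive symbols missing from `u` -/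
noncomputable def posC (n r : ℕ) (u : Fin n → ℤ) : List ℤ :=
  ((Finset.Icc 1 (r:ℤ)).filter (fun a => ¬ ∃ i, u i = a)).sort (· ≥ ·)

/-- descending list of the absolute values of the negative symbols missing from `u` -/
noncomputable def negC (n r : ℕ) (u : Fin n → ℤ) : List ℤ :=
  ((Finset.Icc 1 ((n - r : ℕ):ℤ)).filter (fun a => ¬ ∃ i, u i = -a)).sort (· ≥ ·)

/-- the complement string of `u` -/
noncomputable def complStr (n r : ℕ) (u : Fin n → ℤ) : Fin n → ℤ := fun i =>
  if (i : ℕ) < r then (posC n r u).getD i 0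
  else -((negC n r u).getD (n - 1 - (i : ℕ)) 0)

-- generic facts about a descending nodup list of positive integers
variable {l : List ℤ}

lemma listU.pos (hall : ∀ a ∈ l, 1 ≤ a) {k : ℕ} (hk : k < l.length) : 1 ≤ l.getD k 0 := by
  rw [List.getD_eq_getElem l 0 hk]
  exact hall _ (l.getElem_mem hk)

lemma listU.nonneg (hall : ∀ a ∈ l, 1 ≤ a) (k : ℕ) : 0 ≤ l.getD k 0 := by
  rcases lt_or_ge k l.length with hk | hk
  · exact le_trans zero_le_one (listU.pos hall hk)
  · rw [List.getD_eq_default l 0 hk]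

lemma listU.anti (hs : l.Pairwise (· ≥ ·)) (hall : ∀ a ∈ l, 1 ≤ a)
    {k1 k2 : ℕ} (h : k1 ≤ k2) : l.getD k2 0 ≤ l.getD k1 0 := by
  rcases lt_or_ge k2 l.length with hk2 | hk2
  · have hk1 : k1 < l.length := lt_of_le_of_lt h hk2
    rw [List.getD_eq_getElem l 0 hk1, List.getD_eq_getElem l 0 hk2]
    rcases eq_or_lt_of_le h with rfl | hlt
    · exact le_refl _
    · exact List.pairwise_iff_getElem.mp hs k1 k2 hk1 hk2 hlt
  · rw [List.getD_eq_default l 0 hk2]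
    exact listU.nonneg hall k1

lemma listU.strict (hs : l.Pairwise (· ≥ ·)) (hn : l.Nodup) (hall : ∀ a ∈ l, 1 ≤ a)
    {k1 k2 : ℕ} (h : k1 < k2) (hne : l.getD k2 0 ≠ 0) : l.getD k2 0 < l.getD k1 0 := by
  have hk2 : k2 < l.length := by
    by_contra hc
    exact hne (List.getD_eq_default l 0 (le_of_not_gt hc))
  have hk1 : k1 < l.length := lt_trans h hk2
  rw [List.getD_eq_getElem l 0 hk1, List.getD_eq_getElem l 0 hk2]
  have hle : l[k2] ≤ l[k1] := List.pairwise_iff_getElem.mp hs k1 k2 hk1 hk2 h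
  have hneq : l[k1] ≠ l[k2] := by
    intro he
    exact absurd (hn.getElem_inj_iff.mp he) (by omega)
  omega

lemma listU.nonzero_lt (hall : ∀ a ∈ l, 1 ≤ a) {k : ℕ} (hne : l.getD k 0 ≠ 0) :
    k < l.length := by
  by_contra hc
  exact hne (List.getD_eq_default l 0 (le_of_not_gt hc))

lemma listU.mem_of_nonzero (hall : ∀ a ∈ l, 1 ≤ a) {k : ℕ} (hne : l.getD k 0 ≠ 0) :
    l.getD k 0 ∈ l := by
  have hk := listU.nonzero_lt hall hne
  rw [List.getD_eq_getElem l 0 hk]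
  exact l.getElem_mem hk

end Construction


section ComplStrFacts

variable {u : Fin n → ℤ}

lemma posC_sorted : (posC n r u).Pairwise (· ≥ ·) := Finset.pairwise_sort _ _
lemma posC_nodup : (posC n r u).Nodup := Finset.sort_nodup _ _
lemma negC_sorted : (negC n r u).Pairwise (· ≥ ·) := Finset.pairwise_sort _ _
lemma negC_nodup : (negC n r u).Nodup := Finset.sort_nodup _ _

lemma posC_mem {a : ℤ} : a ∈ posC n r u ↔ (a ∈ Finset.Icc 1 (r:ℤ) ∧ ¬ ∃ i, u i = a) := by
  rw [posC, Finset.mem_sort, Finset.mem_filter]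

lemma negC_mem {a : ℤ} :
    a ∈ negC n r u ↔ (a ∈ Finset.Icc 1 ((n - r : ℕ):ℤ) ∧ ¬ ∃ i, u i = -a) := by
  rw [negC, Finset.mem_sort, Finset.mem_filter]

lemma posC_all : ∀ a ∈ posC n r u, 1 ≤ a := by
  intro a ha
  have := (posC_mem.mp ha).1
  rw [Finset.mem_Icc] at this
  exact this.1

lemma negC_all : ∀ a ∈ negC n r u, 1 ≤ a := by
  intro a ha
  have := (negC_mem.mp ha).1
  rw [Finset.mem_Icc] at this
  exact this.1

lemma posC_length : (posC n r u).length ≤ r := by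
  rw [posC, Finset.length_sort]
  calc ((Finset.Icc 1 (r:ℤ)).filter _).card ≤ (Finset.Icc 1 (r:ℤ)).card :=
        Finset.card_filter_le _ _
    _ = r := by simp

lemma negC_length : (negC n r u).length ≤ n - r := by
  rw [negC, Finset.length_sort]
  calc ((Finset.Icc 1 ((n - r : ℕ):ℤ)).filter _).card
      ≤ (Finset.Icc 1 ((n - r : ℕ):ℤ)).card := Finset.card_filter_le _ _
    _ = n - r := by simp

lemma complStr_pos {i : Fin n} (hi : (i : ℕ) < r) :
    complStr n r u i = (posC n r u).getD i 0 := if_pos hi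

lemma complStr_neg {i : Fin n} (hi : r ≤ (i : ℕ)) :
    complStr n r u i = -((negC n r u).getD (n - 1 - (i : ℕ)) 0) := if_neg (by omega)

lemma complStr_admissible (hr : r ≤ n) (hu : Admissible n r u) :
    Admissible n r (complStr n r u) := by
  refine ⟨?_, ?_, ?_, ?_, ?_⟩
  · intro i hi
    rw [complStr_pos hi]
    refine ⟨listU.nonneg posC_all _, ?_⟩
    rcases lt_or_ge (i : ℕ) (posC n r u).length with hk | hk
    · rw [List.getD_eq_getElem _ 0 hk]
      have := (posC_mem.mp ((posC n r u).getElem_mem hk)).1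
      rw [Finset.mem_Icc] at this
      exact this.2
    · rw [List.getD_eq_default _ 0 hk]
      exact_mod_cast Nat.zero_le r
  · intro i hi
    rw [complStr_neg hi]
    refine ⟨?_, by have := listU.nonneg (negC_all (n := n) (r := r) (u := u)) (n - 1 - (i : ℕ)); omega⟩
    rcases lt_or_ge (n - 1 - (i : ℕ)) (negC n r u).length with hk | hk
    · rw [List.getD_eq_getElem _ 0 hk]
      have := (negC_mem.mp ((negC n r u).getElem_mem hk)).1
      rw [Finset.mem_Icc] at this
      omega
    · rw [List.getD_eq_default _ 0 hk]
      omega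
  · intro i j hij
    have hij' : (i : ℕ) ≤ (j : ℕ) := Fin.le_def.mp hij
    rcases lt_or_ge (i : ℕ) r with hi | hi
    · rcases lt_or_ge (j : ℕ) r with hj | hj
      · rw [complStr_pos hi, complStr_pos hj]
        exact listU.anti posC_sorted posC_all hij'
      · rw [complStr_pos hi, complStr_neg hj]
        have h1 := listU.nonneg (posC_all (n := n) (r := r) (u := u)) (i : ℕ)
        have h2 := listU.nonneg (negC_all (n := n) (r := r) (u := u)) (n - 1 - (j : ℕ))
        omega
    · have hj : r ≤ (j : ℕ) := le_trans hi hij'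
      rw [complStr_neg hi, complStr_neg hj]
      have := listU.anti (negC_sorted (n := n) (r := r) (u := u)) negC_all
        (show n - 1 - (j : ℕ) ≤ n - 1 - (i : ℕ) by omega)
      omega
  · intro i j hij hj hne
    have hij' : (i : ℕ) < (j : ℕ) := Fin.lt_def.mp hij
    have hi : (i : ℕ) < r := by omega
    rw [complStr_pos hi, complStr_pos hj]
    rw [complStr_pos hj] at hne
    exact listU.strict posC_sorted posC_nodup posC_all hij' hne
  · intro i j hij hi hne
    have hij' : (i : ℕ) < (j : ℕ) := Fin.lt_def.mp hij
    have hj : r ≤ (j : ℕ) := by omega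
    rw [complStr_neg hi, complStr_neg hj]
    rw [complStr_neg hi] at hne
    have hne' : (negC n r u).getD (n - 1 - (i : ℕ)) 0 ≠ 0 := by omega
    have hjn : (j : ℕ) < n := j.isLt
    have hlt : n - 1 - (j : ℕ) < n - 1 - (i : ℕ) := by omega
    have := listU.strict negC_sorted negC_nodup negC_all hlt hne'
    omega

lemma complStr_complOf (hr : r ≤ n) (hu : Admissible n r u) :
    ComplOf n r u (complStr n r u) := by
  intro a ha
  constructor
  · rintro ⟨i, hi⟩
    rcases lt_or_ge (i : ℕ) r with h' | h'
    · rw [complStr_pos h'] at hi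
      have hmem := listU.mem_of_nonzero (posC_all (n := n) (r := r) (u := u))
        (k := (i : ℕ)) (by omega)
      rw [hi] at hmem
      have hm2 := posC_mem.mp hmem
      rw [Finset.mem_Icc] at hm2
      have h1 := hm2.1.1
      exact ⟨by omega, hm2.1.2, hm2.2⟩
    · rw [complStr_neg h'] at hi
      have hmem := listU.mem_of_nonzero (negC_all (n := n) (r := r) (u := u))
        (k := n - 1 - (i : ℕ)) (by omega)
      have hval : (negC n r u).getD (n - 1 - (i : ℕ)) 0 = -a := by omega
      rw [hval] at hmem
      have hm2 := negC_mem.mp hmem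
      rw [Finset.mem_Icc] at hm2
      have h1 := hm2.1.1
      have h1b := hm2.1.2
      refine ⟨by omega, by omega, ?_⟩
      have h2 := hm2.2
      intro ⟨j, hj⟩
      exact h2 ⟨j, by omega⟩
  · rintro ⟨hlo, hhi, hnu⟩
    rcases lt_or_ge 0 a with hpos | hneg
    · have hmem : a ∈ posC n r u := posC_mem.mpr ⟨Finset.mem_Icc.mpr ⟨by omega, hhi⟩, hnu⟩
      obtain ⟨k, hk, hka⟩ := List.mem_iff_getElem.mp hmem
      have hkr : k < r := lt_of_lt_of_le hk posC_length
      refine ⟨⟨k, by omega⟩, ?_⟩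
      rw [complStr_pos (show ((⟨k, by omega⟩ : Fin n) : ℕ) < r from hkr)]
      rw [List.getD_eq_getElem _ 0 hk]
      exact hka
    · have hneg' : a < 0 := by omega
      have hmem : -a ∈ negC n r u := by
        apply negC_mem.mpr
        refine ⟨Finset.mem_Icc.mpr ⟨by omega, by omega⟩, ?_⟩
        intro ⟨j, hj⟩
        exact hnu ⟨j, by omega⟩
      obtain ⟨k, hk, hka⟩ := List.mem_iff_getElem.mp hmem
      have hknr : k < n - r := lt_of_lt_of_le hk negC_length
      have hn0 : 0 < n := by omega
      refine ⟨⟨n - 1 - k, by omega⟩, ?_⟩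
      have hge : r ≤ ((⟨n - 1 - k, by omega⟩ : Fin n) : ℕ) := by
        show r ≤ n - 1 - k
        omega
      rw [complStr_neg hge]
      have hidx : n - 1 - ((⟨n - 1 - k, by omega⟩ : Fin n) : ℕ) = k := by
        show n - 1 - (n - 1 - k) = k
        omega
      rw [hidx, List.getD_eq_getElem _ 0 hk, hka]
      omega

end ComplStrFacts

end SnrCompl

/-- complementation sends covering pairs to reversed covering
pairs: if `w` covers `w'` in `S(n,r)` then `w^c` covers `(w')^c`. -/
theorem Snr_compl_covers (n r : ℕ) (hr : r ≤ n) (w w' wc wc' : Fin n → ℤ)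
    (hw : Admissible n r w) (hw' : Admissible n r w')
    (hwc : Admissible n r wc) (hwc' : Admissible n r wc')
    (hcw : ComplOf n r w wc) (hcw' : ComplOf n r w' wc')
    (hcov : SCovers n r w' w) :
    SCovers n r wc wc' := by
  obtain ⟨⟨hle, hne⟩, hnomid⟩ := hcov
  constructor
  · constructor
    · exact SnrCompl.sle_compl hw' hw hwc' hwc hcw' hcw hle
    · intro heq
      apply hne
      have h1 := SnrCompl.compl_symm hw hcw
      have h2 := SnrCompl.compl_symm hw' hcw'
      rw [heq] at h1
      exact SnrCompl.compl_unique hwc' hw' hw h2 h1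
  · rintro ⟨u, hu, ⟨h1le, h1ne⟩, ⟨h2le, h2ne⟩⟩
    have huc := SnrCompl.complStr_admissible hr hu
    have hcu := SnrCompl.complStr_complOf hr hu
    have hwcw : ComplOf n r wc w := SnrCompl.compl_symm hw hcw
    have hwcw' : ComplOf n r wc' w' := SnrCompl.compl_symm hw' hcw'
    apply hnomid
    refine ⟨SnrCompl.complStr n r u, huc, ⟨?_, ?_⟩, ⟨?_, ?_⟩⟩
    · exact SnrCompl.sle_compl hu hwc' huc hw' hcu hwcw' h2le
    · intro heq
      apply h2ne
      have h3 : ComplOf n r u w' := by rw [heq]; exact hcu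
      have h4 := SnrCompl.compl_symm hu h3
      exact SnrCompl.compl_unique hw' hu hwc' h4 hcw'
    · exact SnrCompl.sle_compl hwc hu hw huc hwcw hcu h1le
    · intro heq
      apply h1ne
      have h3 : ComplOf n r u w := by rw [← heq]; exact hcu
      have h4 := SnrCompl.compl_symm hu h3
      exact SnrCompl.compl_unique hw hwc hu hcw h4
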